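/- Let f ∈ G be a bump whose support is not all of ℚ. Then the support of f is bounded above or bounded below in ℚ but not both (i.e. f is cofinal) if and only if for every g ∈ G, support(g ∘ f ∘ g⁻¹) ∩ support(f) ≠ ∅. -/

import Mathlib

open FirstOrder

/-- `G` is the group of all order-automorphisms of `(ℚ, <)` under composition. -/
abbrev G : Type := ℚ ≃o ℚ

/-- The support of `f ∈ G`: the set of points moved by `f`. -/
def support (f : G) : Set ℚ := {a : ℚ | f a ≠ a}

/-- The orbital relation of `f`: `a ~_f b` iff `f^m a ≤ b ≤ f^n a` for some integers `m, n`. -/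
def orbRel (f : G) (a b : ℚ) : Prop := ∃ m n : ℤ, (f ^ m) a ≤ b ∧ b ≤ (f ^ n) a

/-- An orbital of `f` is an equivalence class of the orbital relation of `f`. -/
def IsOrbital (f : G) (X : Set ℚ) : Prop := ∃ a : ℚ, X = {b : ℚ | orbRel f a b}

/-- An orbital is nontrivial if it contains a point moved by `f`. -/
def IsNontrivialOrbital (f : G) (X : Set ℚ) : Prop :=
  IsOrbital f X ∧ ∃ a ∈ X, f a ≠ a

/-- A bump is a non-identity element of `G` with exactly one nontrivial orbital. -/
def IsBump (f : G) : Prop := f ≠ 1 ∧ ∃! X : Set ℚ, IsNontrivialOrbital f X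

/-- `g` is a restriction of `f`: the support of `g` is contained in that of `f`, and
`g` agrees with `f` on the support of `g`. -/
def IsRestriction (g f : G) : Prop :=
  support g ⊆ support f ∧ ∀ a ∈ support g, g a = f a

lemma fix_zpow (f : G) {c : ℚ} (h : f c = c) : ∀ m : ℤ, (f ^ m) c = c := by
  have hinv : f⁻¹ c = c := by
    conv_lhs => rw [← h]
    exact f.symm_apply_apply c
  intro m
  induction m using Int.induction_on with
  | zero => rfl
  | succ n ih => rw [zpow_add_one, show (f ^ (n:ℤ) * f) c = (f ^ (n:ℤ)) (f c) from rfl, h, ih]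
  | pred n ih =>
      rw [zpow_sub_one, show (f ^ (-n:ℤ) * f⁻¹) c = (f ^ (-n:ℤ)) (f⁻¹ c) from rfl, hinv, ih]

lemma fixed_of_orbRel (f : G) {a c : ℚ} (hfa : f a ≠ a) (ho : orbRel f a c) (hc : f c = c) :
    False := by
  obtain ⟨m, n, h1, h2⟩ := ho
  have h1' : a ≤ c := by
    have := (f ^ (-m)).monotone h1
    rwa [show (f ^ (-m:ℤ)) ((f ^ m) a) = ((f ^ (-m:ℤ)) * f ^ m) a from rfl,
      ← zpow_add, neg_add_cancel, zpow_zero, show (1:G) a = a from rfl,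
      fix_zpow f hc] at this
  have h2' : c ≤ a := by
    have := (f ^ (-n)).monotone h2
    rwa [show (f ^ (-n:ℤ)) ((f ^ n) a) = ((f ^ (-n:ℤ)) * f ^ n) a from rfl,
      ← zpow_add, neg_add_cancel, zpow_zero, show (1:G) a = a from rfl,
      fix_zpow f hc] at this
  exact hfa (le_antisymm h1' h2' ▸ hc)

lemma support_convex (f : G) (hb : IsBump f) {a b c : ℚ} (ha : a ∈ support f)
    (hab : b ∈ support f) (h1 : a ≤ c) (h2 : c ≤ b) : c ∈ support f := by
  obtain ⟨-, X, hX, huniq⟩ := hb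
  have hXa : IsNontrivialOrbital f {x : ℚ | orbRel f a x} :=
    ⟨⟨a, rfl⟩, a, ⟨0, 0, by simp [show ((f:G)^(0:ℤ)) a = a from rfl]⟩, ha⟩
  have hXb : IsNontrivialOrbital f {x : ℚ | orbRel f b x} :=
    ⟨⟨b, rfl⟩, b, ⟨0, 0, by simp [show ((f:G)^(0:ℤ)) b = b from rfl]⟩, hab⟩
  have heq : {x : ℚ | orbRel f a x} = {x : ℚ | orbRel f b x} := by
    rw [huniq _ hXa, huniq _ hXb]
  have hbmem : orbRel f a b := by
    have : b ∈ {x : ℚ | orbRel f b x} := ⟨0, 0, by simp [show ((f:G)^(0:ℤ)) b = b from rfl]⟩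
    rwa [← heq] at this
  obtain ⟨m, n, hm, hn⟩ := hbmem
  have hoc : orbRel f a c := ⟨0, n,
    le_trans (le_of_eq (rfl : ((f:G)^(0:ℤ)) a = a)) h1, le_trans h2 hn⟩
  intro hc
  exact fixed_of_orbRel f ha hoc hc

lemma support_conj (f g : G) : support (g * f * g⁻¹) = g '' support f := by
  ext x
  simp only [support, Set.mem_setOf_eq, Set.mem_image]
  constructor
  · intro hx
    exact ⟨g.symm x, fun h => hx (by show g (f (g.symm x)) = x; rw [h, g.apply_symm_apply]),
      g.apply_symm_apply x⟩
  · rintro ⟨y, hy, rfl⟩ hx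
    apply hy
    have h2 : g (f (g.symm (g y))) = g y := hx
    rw [g.symm_apply_apply] at h2
    exact g.injective h2

/-- A non-coterminal bump `f` is cofinal (support bounded above or below but not both) iff the
support of every conjugate of `f` meets the support of `f`. -/
theorem cofinal_iff (f : G) (hb : IsBump f) (hne : support f ≠ Set.univ) :
    ((BddAbove (support f) ∧ ¬ BddBelow (support f)) ∨
     (BddBelow (support f) ∧ ¬ BddAbove (support f))) ↔
      ∀ g : G, (support (g * f * g⁻¹) ∩ support f).Nonempty := by
  obtain ⟨a, ha⟩ : ∃ a, a ∈ support f := by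
    by_contra hc; push_neg at hc
    exact hb.1 (by ext x; exact not_not.1 (hc x))
  constructor
  · rintro (⟨hA, hB⟩ | ⟨hB, hA⟩) g
    · -- support is downward closed
      have hdc : ∀ c a', a' ∈ support f → c ≤ a' → c ∈ support f := by
        intro c a' ha' hca'
        obtain ⟨x, hx, hxc⟩ : ∃ x ∈ support f, x < c := by
          by_contra hc; push_neg at hc
          exact hB ⟨c, fun y hy => hc y hy⟩
        exact support_convex f hb hx ha' hxc.le hca'
      rw [support_conj]
      refine ⟨min a (g a), ⟨g.symm (min a (g a)), ?_, g.apply_symm_apply _⟩,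
        hdc _ a ha (min_le_left _ _)⟩
      have : g.symm (min a (g a)) ≤ a := by
        have := g.symm.monotone (min_le_right a (g a))
        rwa [g.symm_apply_apply] at this
      exact hdc _ a ha this
    · -- support is upward closed
      have huc : ∀ c a', a' ∈ support f → a' ≤ c → c ∈ support f := by
        intro c a' ha' hca'
        obtain ⟨x, hx, hxc⟩ : ∃ x ∈ support f, c < x := by
          by_contra hc; push_neg at hc
          exact hA ⟨c, fun y hy => hc y hy⟩
        exact support_convex f hb ha' hx hca' hxc.le
      rw [support_conj]
      refine ⟨max a (g a), ⟨g.symm (max a (g a)), ?_, g.apply_symm_apply _⟩,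
        huc _ a ha (le_max_left _ _)⟩
      have : a ≤ g.symm (max a (g a)) := by
        have := g.symm.monotone (le_max_right a (g a))
        rwa [g.symm_apply_apply] at this
      exact huc _ a ha this
  · intro hAll
    by_cases hA : BddAbove (support f) <;> by_cases hB : BddBelow (support f)
    · -- both bounded: translate support past itself
      exfalso
      obtain ⟨u, hu⟩ := hA
      obtain ⟨l, hl⟩ := hB
      obtain ⟨p, hp1, hp2⟩ := hAll (OrderIso.addLeft (u - l + 1) : ℚ ≃o ℚ)
      rw [support_conj] at hp1
      obtain ⟨y, hy, rfl⟩ := hp1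
      have h1 : (OrderIso.addLeft (u - l + 1) : ℚ ≃o ℚ) y = u - l + 1 + y := rfl
      have h2 : u - l + 1 + y ≤ u := h1 ▸ hu hp2
      have h3 : l ≤ y := hl hy
      linarith
    · exact Or.inl ⟨hA, hB⟩
    · exact Or.inr ⟨hB, hA⟩
    · -- unbounded both ways: support = univ, contradiction
      exfalso
      apply hne
      ext c
      simp only [Set.mem_univ, iff_true]
      obtain ⟨x, hx, hxc⟩ : ∃ x ∈ support f, x < c := by
        by_contra hc; push_neg at hc
        exact hB ⟨c, fun y hy => hc y hy⟩
      obtain ⟨y, hy, hcy⟩ : ∃ y ∈ support f, c < y := by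
        by_contra hc; push_neg at hc
        exact hA ⟨c, fun z hz => hc z hz⟩
      exact support_convex f hb hx hy hxc.le hcy.le
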